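/- Let H be a Hopf algebra over a field k, and let C be a left (or right) coideal subalgebra of H with S(C) = C, where S is the antipode. Then C is a Hopf subalgebra of H, i.e. C is also a subcoalgebra: Δ(C) ⊆ C ⊗ C. -/

import Mathlib

open TensorProduct

noncomputable section Stmt5Aux

namespace Stmt5Aux

open Coalgebra HopfAlgebra LinearMap

section Conv

variable {R : Type*} {A : Type*} {B : Type*} [CommSemiring R] [Semiring A] [HopfAlgebra R A]
  [Semiring B] [Algebra R B]

/-- Convolution product on `Hom(A, B)`. -/
def conv (f g : A →ₗ[R] B) : A →ₗ[R] B :=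
  LinearMap.mul' R B ∘ₗ TensorProduct.map f g ∘ₗ (Coalgebra.comul : A →ₗ[R] A ⊗[R] A)

/-- Convolution unit. -/
def convUnit : A →ₗ[R] B :=
  Algebra.linearMap R B ∘ₗ (Coalgebra.counit : A →ₗ[R] R)

lemma conv_apply (f g : A →ₗ[R] B) (x : A) :
    conv f g x = LinearMap.mul' R B (TensorProduct.map f g (Coalgebra.comul x)) := rfl

lemma head_assoc (t : B ⊗[R] (B ⊗[R] B)) :
    LinearMap.mul' R B ((LinearMap.mul' R B).rTensor B
        ((TensorProduct.assoc R B B B).symm t)) =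
      LinearMap.mul' R B ((LinearMap.mul' R B).lTensor B t) := by
  have h : LinearMap.mul' R B ∘ₗ (LinearMap.mul' R B).rTensor B
      ∘ₗ ((TensorProduct.assoc R B B B).symm : B ⊗[R] (B ⊗[R] B) →ₗ[R] (B ⊗[R] B) ⊗[R] B)
      = LinearMap.mul' R B ∘ₗ (LinearMap.mul' R B).lTensor B := by
    apply TensorProduct.ext'
    intro b t
    induction t using TensorProduct.induction_on with
    | zero => simp
    | add u v hu hv => simp_all [tmul_add]
    | tmul y z => simp [mul_assoc]
  exact LinearMap.congr_fun h t

lemma conv_assoc (f g h : A →ₗ[R] B) : conv (conv f g) h = conv f (conv g h) := by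
  have e1 : conv (conv f g) h
      = LinearMap.mul' R B ∘ₗ (LinearMap.mul' R B).rTensor B
          ∘ₗ TensorProduct.map (TensorProduct.map f g) h ∘ₗ comul.rTensor A ∘ₗ comul := by
    unfold conv
    rw [← rTensor_comp_map, ← map_comp_rTensor]
    rfl
  have e2 : conv f (conv g h)
      = LinearMap.mul' R B ∘ₗ (LinearMap.mul' R B).lTensor B
          ∘ₗ TensorProduct.map f (TensorProduct.map g h) ∘ₗ comul.lTensor A ∘ₗ comul := by
    unfold conv
    rw [← lTensor_comp_map, ← map_comp_lTensor]
    rfl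
  rw [e1, e2]
  apply LinearMap.ext
  intro x
  simp only [LinearMap.comp_apply]
  rw [← coassoc_symm_apply, TensorProduct.map_map_assoc_symm, head_assoc]

lemma conv_unit_left (f : A →ₗ[R] B) : conv convUnit f = f := by
  unfold conv convUnit
  have e : TensorProduct.map (Algebra.linearMap R B ∘ₗ (Coalgebra.counit : A →ₗ[R] R)) f
      = TensorProduct.map (Algebra.linearMap R B) f ∘ₗ Coalgebra.counit.rTensor A := by
    rw [map_comp_rTensor]
  rw [e]
  apply LinearMap.ext
  intro x
  simp only [LinearMap.comp_apply, rTensor_counit_comul]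
  simp [Algebra.smul_def]

lemma conv_unit_right (f : A →ₗ[R] B) : conv f convUnit = f := by
  unfold conv convUnit
  have e : TensorProduct.map f (Algebra.linearMap R B ∘ₗ (Coalgebra.counit : A →ₗ[R] R))
      = TensorProduct.map f (Algebra.linearMap R B) ∘ₗ Coalgebra.counit.lTensor A := by
    rw [map_comp_lTensor]
  rw [e]
  apply LinearMap.ext
  intro x
  simp only [LinearMap.comp_apply, lTensor_counit_comul]
  simp [Algebra.smul_def]

end Conv

section AntipodeComul

variable {R : Type*} {A : Type*} [CommSemiring R] [Semiring A] [HopfAlgebra R A]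

/-- `Δ` is an algebra map, linear map version. -/
lemma mul'_comp_map_comul :
    LinearMap.mul' R (A ⊗[R] A) ∘ₗ TensorProduct.map (Coalgebra.comul : A →ₗ[R] A ⊗[R] A)
        (Coalgebra.comul : A →ₗ[R] A ⊗[R] A)
      = (Coalgebra.comul : A →ₗ[R] A ⊗[R] A) ∘ₗ LinearMap.mul' R A := by
  apply TensorProduct.ext'
  intro a b
  simp [LinearMap.mul'_apply]

/-- The left convolution-inverse property: `(Δ ∘ S) ⋆ Δ = u`. -/
lemma conv_antipode_comul :
    conv ((Coalgebra.comul : A →ₗ[R] A ⊗[R] A) ∘ₗ (HopfAlgebra.antipode R : A →ₗ[R] A))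
        (Coalgebra.comul : A →ₗ[R] A ⊗[R] A)
      = (convUnit : A →ₗ[R] A ⊗[R] A) := by
  have e : TensorProduct.map
        ((Coalgebra.comul : A →ₗ[R] A ⊗[R] A) ∘ₗ (HopfAlgebra.antipode R : A →ₗ[R] A))
        (Coalgebra.comul : A →ₗ[R] A ⊗[R] A)
      = TensorProduct.map (Coalgebra.comul : A →ₗ[R] A ⊗[R] A)
          (Coalgebra.comul : A →ₗ[R] A ⊗[R] A)
        ∘ₗ (HopfAlgebra.antipode R : A →ₗ[R] A).rTensor A := by
    rw [map_comp_rTensor]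
  apply LinearMap.ext
  intro x
  rw [conv_apply, e]
  simp only [LinearMap.comp_apply]
  have h1 := LinearMap.congr_fun (mul'_comp_map_comul (R := R) (A := A))
    ((HopfAlgebra.antipode R : A →ₗ[R] A).rTensor A (Coalgebra.comul x))
  simp only [LinearMap.comp_apply] at h1
  rw [h1, mul_antipode_rTensor_comul_apply]
  simp [convUnit, Algebra.algebraMap_eq_smul_one]

/-- The map `x ⊗ (u ⊗ w) ↦ (x * w) ⊗ u`. -/
def Bmap : A ⊗[R] (A ⊗[R] A) →ₗ[R] A ⊗[R] A :=
  (LinearMap.mul' R A).rTensor A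
    ∘ₗ ((TensorProduct.assoc R A A A).symm : A ⊗[R] (A ⊗[R] A) →ₗ[R] (A ⊗[R] A) ⊗[R] A)
    ∘ₗ (TensorProduct.comm R A A).toLinearMap.lTensor A

@[simp] lemma Bmap_tmul (x u w : A) : (Bmap (x ⊗ₜ[R] (u ⊗ₜ[R] w)) : A ⊗[R] A)
    = (x * w) ⊗ₜ[R] u := by
  simp [Bmap, LinearMap.mul'_apply]

/-- Key pure-tensor identity between the two ways of contracting the fourfold coproduct. -/
lemma key_maps_eq :
    LinearMap.mul' R (A ⊗[R] A)
        ∘ₗ ((TensorProduct.assoc R A A (A ⊗[R] A)).symm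
            : A ⊗[R] (A ⊗[R] (A ⊗[R] A)) →ₗ[R] (A ⊗[R] A) ⊗[R] (A ⊗[R] A))
        ∘ₗ ((TensorProduct.map (HopfAlgebra.antipode R : A →ₗ[R] A)
              (HopfAlgebra.antipode R : A →ₗ[R] A)
            ∘ₗ (TensorProduct.comm R A A).toLinearMap).lTensor A).lTensor A
      = Bmap ∘ₗ (TensorProduct.map
            (LinearMap.mul' R A ∘ₗ (HopfAlgebra.antipode R : A →ₗ[R] A).lTensor A)
            (HopfAlgebra.antipode R : A →ₗ[R] A)
            ∘ₗ ((TensorProduct.assoc R A A A).symm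
              : A ⊗[R] (A ⊗[R] A) →ₗ[R] (A ⊗[R] A) ⊗[R] A)).lTensor A := by
  apply TensorProduct.ext'
  intro x t
  induction t using TensorProduct.induction_on with
  | zero => simp
  | add a b ha hb => simp_all [tmul_add]
  | tmul y v =>
    induction v using TensorProduct.induction_on with
    | zero => simp [tmul_zero]
    | add a b ha hb => simp_all [tmul_add]
    | tmul z w =>
      simp [LinearMap.mul'_apply, Algebra.TensorProduct.tmul_mul_tmul]

/-- Contraction of the last two pieces. -/
lemma final_maps_eq :
    Bmap ∘ₗ (TensorProduct.map (Algebra.linearMap R A) (HopfAlgebra.antipode R : A →ₗ[R] A)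
        ∘ₗ TensorProduct.mk R R A 1).lTensor A
      = ((TensorProduct.mk R A A).flip 1) ∘ₗ LinearMap.mul' R A
          ∘ₗ (HopfAlgebra.antipode R : A →ₗ[R] A).lTensor A := by
  apply TensorProduct.ext'
  intro x y
  simp [LinearMap.mul'_apply]

/-- The right convolution-inverse property: `Δ ⋆ ((S ⊗ S) ∘ τ ∘ Δ) = u`. -/
lemma conv_comul_antipode :
    conv (Coalgebra.comul : A →ₗ[R] A ⊗[R] A)
        (TensorProduct.map (HopfAlgebra.antipode R : A →ₗ[R] A)
            (HopfAlgebra.antipode R : A →ₗ[R] A)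
          ∘ₗ (TensorProduct.comm R A A).toLinearMap
          ∘ₗ (Coalgebra.comul : A →ₗ[R] A ⊗[R] A))
      = (convUnit : A →ₗ[R] A ⊗[R] A) := by
  set g : A →ₗ[R] A ⊗[R] A := TensorProduct.map (HopfAlgebra.antipode R : A →ₗ[R] A)
      (HopfAlgebra.antipode R : A →ₗ[R] A)
    ∘ₗ (TensorProduct.comm R A A).toLinearMap
    ∘ₗ (Coalgebra.comul : A →ₗ[R] A ⊗[R] A) with hg
  apply LinearMap.ext
  intro x
  rw [conv_apply]
  -- Step 1: split the outer map
  have e1 : TensorProduct.map (Coalgebra.comul : A →ₗ[R] A ⊗[R] A) g (Coalgebra.comul x)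
      = g.lTensor (A ⊗[R] A)
          ((Coalgebra.comul : A →ₗ[R] A ⊗[R] A).rTensor A (Coalgebra.comul x)) := by
    have h : g.lTensor (A ⊗[R] A) ∘ₗ (Coalgebra.comul : A →ₗ[R] A ⊗[R] A).rTensor A
        = TensorProduct.map (Coalgebra.comul : A →ₗ[R] A ⊗[R] A) g :=
      by simp
    rw [← h]
    rfl
  rw [e1, ← coassoc_symm_apply]
  -- Step 2: push through the associator
  have e2 : g.lTensor (A ⊗[R] A)
        ((TensorProduct.assoc R A A A).symm
          ((Coalgebra.comul : A →ₗ[R] A ⊗[R] A).lTensor A (Coalgebra.comul x)))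
      = (TensorProduct.assoc R A A (A ⊗[R] A)).symm
          ((g.lTensor A).lTensor A
            ((Coalgebra.comul : A →ₗ[R] A ⊗[R] A).lTensor A (Coalgebra.comul x))) := by
    have h := TensorProduct.map_map_assoc_symm (LinearMap.id : A →ₗ[R] A)
      (LinearMap.id : A →ₗ[R] A) g
      ((Coalgebra.comul : A →ₗ[R] A ⊗[R] A).lTensor A (Coalgebra.comul x))
    rw [TensorProduct.map_id] at h
    exact h
  rw [e2]
  -- Step 3: expand the inner comultiplication using coassociativity
  have e3 : (g.lTensor A).lTensor A ∘ₗ (Coalgebra.comul : A →ₗ[R] A ⊗[R] A).lTensor A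
      = ((TensorProduct.map (HopfAlgebra.antipode R : A →ₗ[R] A)
              (HopfAlgebra.antipode R : A →ₗ[R] A)
            ∘ₗ (TensorProduct.comm R A A).toLinearMap).lTensor A).lTensor A
          ∘ₗ (((TensorProduct.assoc R A A A : (A ⊗[R] A) ⊗[R] A →ₗ[R] A ⊗[R] (A ⊗[R] A))
            ∘ₗ (Coalgebra.comul : A →ₗ[R] A ⊗[R] A).rTensor A
            ∘ₗ (Coalgebra.comul : A →ₗ[R] A ⊗[R] A))).lTensor A := by
    rw [← lTensor_comp, ← lTensor_comp]
    congr 1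
    rw [hg]
    simp only [lTensor_comp, LinearMap.comp_assoc]
    rw [Coalgebra.coassoc]
  have e3' := LinearMap.congr_fun e3 (Coalgebra.comul x)
  simp only [LinearMap.comp_apply] at e3'
  rw [e3']
  -- Step 4: apply the key identity
  have e4 := LinearMap.congr_fun (key_maps_eq (R := R) (A := A))
    ((((TensorProduct.assoc R A A A : (A ⊗[R] A) ⊗[R] A →ₗ[R] A ⊗[R] (A ⊗[R] A))
        ∘ₗ (Coalgebra.comul : A →ₗ[R] A ⊗[R] A).rTensor A
        ∘ₗ (Coalgebra.comul : A →ₗ[R] A ⊗[R] A)).lTensor A) (Coalgebra.comul x))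
  simp only [LinearMap.comp_apply, LinearEquiv.coe_coe] at e4
  rw [e4]
  -- Step 5: collapse the associators and apply the antipode axiom
  have e5 : (TensorProduct.map
        (LinearMap.mul' R A ∘ₗ (HopfAlgebra.antipode R : A →ₗ[R] A).lTensor A)
        (HopfAlgebra.antipode R : A →ₗ[R] A)
        ∘ₗ ((TensorProduct.assoc R A A A).symm
          : A ⊗[R] (A ⊗[R] A) →ₗ[R] (A ⊗[R] A) ⊗[R] A)).lTensor A
      ∘ₗ ((TensorProduct.assoc R A A A : (A ⊗[R] A) ⊗[R] A →ₗ[R] A ⊗[R] (A ⊗[R] A))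
          ∘ₗ (Coalgebra.comul : A →ₗ[R] A ⊗[R] A).rTensor A
          ∘ₗ (Coalgebra.comul : A →ₗ[R] A ⊗[R] A)).lTensor A
      = (TensorProduct.map (Algebra.linearMap R A) (HopfAlgebra.antipode R : A →ₗ[R] A)
          ∘ₗ TensorProduct.mk R R A 1).lTensor A := by
    rw [← lTensor_comp]
    congr 1
    apply LinearMap.ext
    intro y
    simp only [LinearMap.comp_apply, LinearEquiv.coe_coe]
    rw [LinearEquiv.symm_apply_apply]
    have h1 : TensorProduct.map
          (LinearMap.mul' R A ∘ₗ (HopfAlgebra.antipode R : A →ₗ[R] A).lTensor A)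
          (HopfAlgebra.antipode R : A →ₗ[R] A)
          ∘ₗ (Coalgebra.comul : A →ₗ[R] A ⊗[R] A).rTensor A
        = TensorProduct.map
            ((LinearMap.mul' R A ∘ₗ (HopfAlgebra.antipode R : A →ₗ[R] A).lTensor A)
              ∘ₗ (Coalgebra.comul : A →ₗ[R] A ⊗[R] A))
            (HopfAlgebra.antipode R : A →ₗ[R] A) := by simp
    have h1' := LinearMap.congr_fun h1 (Coalgebra.comul y)
    simp only [LinearMap.comp_apply] at h1'
    rw [h1', LinearMap.comp_assoc, mul_antipode_lTensor_comul]
    have h2 : TensorProduct.map (Algebra.linearMap R A)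
          (HopfAlgebra.antipode R : A →ₗ[R] A)
          ∘ₗ (Coalgebra.counit : A →ₗ[R] R).rTensor A
        = TensorProduct.map (Algebra.linearMap R A ∘ₗ (Coalgebra.counit : A →ₗ[R] R))
            (HopfAlgebra.antipode R : A →ₗ[R] A) := by simp
    have h2' := LinearMap.congr_fun h2 (Coalgebra.comul y)
    simp only [LinearMap.comp_apply] at h2'
    rw [← h2', rTensor_counit_comul]
    rfl
  have e5' := LinearMap.congr_fun e5 (Coalgebra.comul x)
  simp only [LinearMap.comp_apply] at e5'
  rw [e5']
  -- Step 6: final contraction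
  have e6 := LinearMap.congr_fun (final_maps_eq (R := R) (A := A)) (Coalgebra.comul x)
  simp only [LinearMap.comp_apply] at e6
  rw [e6, mul_antipode_lTensor_comul_apply]
  simp only [convUnit, LinearMap.comp_apply, Algebra.linearMap_apply]
  rw [Algebra.TensorProduct.algebraMap_apply]
  rfl

/-- The antipode is an anti-coalgebra morphism. -/
lemma comul_comp_antipode :
    (Coalgebra.comul : A →ₗ[R] A ⊗[R] A) ∘ₗ (HopfAlgebra.antipode R : A →ₗ[R] A)
      = TensorProduct.map (HopfAlgebra.antipode R : A →ₗ[R] A)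
            (HopfAlgebra.antipode R : A →ₗ[R] A)
          ∘ₗ (TensorProduct.comm R A A).toLinearMap
          ∘ₗ (Coalgebra.comul : A →ₗ[R] A ⊗[R] A) := by
  calc (Coalgebra.comul : A →ₗ[R] A ⊗[R] A) ∘ₗ (HopfAlgebra.antipode R : A →ₗ[R] A)
      = conv ((Coalgebra.comul : A →ₗ[R] A ⊗[R] A) ∘ₗ (HopfAlgebra.antipode R : A →ₗ[R] A))
          convUnit := (conv_unit_right _).symm
    _ = conv ((Coalgebra.comul : A →ₗ[R] A ⊗[R] A) ∘ₗ (HopfAlgebra.antipode R : A →ₗ[R] A))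
          (conv (Coalgebra.comul : A →ₗ[R] A ⊗[R] A)
            (TensorProduct.map (HopfAlgebra.antipode R : A →ₗ[R] A)
                (HopfAlgebra.antipode R : A →ₗ[R] A)
              ∘ₗ (TensorProduct.comm R A A).toLinearMap
              ∘ₗ (Coalgebra.comul : A →ₗ[R] A ⊗[R] A))) := by
        rw [conv_comul_antipode]
    _ = conv (conv ((Coalgebra.comul : A →ₗ[R] A ⊗[R] A)
            ∘ₗ (HopfAlgebra.antipode R : A →ₗ[R] A)) (Coalgebra.comul : A →ₗ[R] A ⊗[R] A))
          (TensorProduct.map (HopfAlgebra.antipode R : A →ₗ[R] A)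
              (HopfAlgebra.antipode R : A →ₗ[R] A)
            ∘ₗ (TensorProduct.comm R A A).toLinearMap
            ∘ₗ (Coalgebra.comul : A →ₗ[R] A ⊗[R] A)) := (conv_assoc _ _ _).symm
    _ = conv convUnit
          (TensorProduct.map (HopfAlgebra.antipode R : A →ₗ[R] A)
              (HopfAlgebra.antipode R : A →ₗ[R] A)
            ∘ₗ (TensorProduct.comm R A A).toLinearMap
            ∘ₗ (Coalgebra.comul : A →ₗ[R] A ⊗[R] A)) := by rw [conv_antipode_comul]
    _ = _ := conv_unit_left _

lemma comul_antipode_apply (a : A) :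
    Coalgebra.comul (R := R) (HopfAlgebra.antipode (R := R) a)
      = TensorProduct.map (HopfAlgebra.antipode R : A →ₗ[R] A)
          (HopfAlgebra.antipode R : A →ₗ[R] A)
          (TensorProduct.comm R A A (Coalgebra.comul a)) := by
  have h := LinearMap.congr_fun (comul_comp_antipode (R := R) (A := A)) a
  simpa using h

end AntipodeComul

section Intersection

variable {k V : Type*} [Field k] [AddCommGroup V] [Module k V]

lemma mem_range_map_subtype (C : Submodule k V) (x : V ⊗[k] V)
    (h1 : x ∈ LinearMap.range (TensorProduct.map (LinearMap.id : V →ₗ[k] V) C.subtype))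
    (h2 : x ∈ LinearMap.range (TensorProduct.map C.subtype (LinearMap.id : V →ₗ[k] V))) :
    x ∈ LinearMap.range (TensorProduct.map C.subtype C.subtype) := by
  obtain ⟨y, hy⟩ := h1
  -- x is killed by mkQ ⊗ id
  have hx0 : C.mkQ.rTensor V x = 0 := by
    have hx : x ∈ LinearMap.range (C.subtype.rTensor V) := h2
    rw [← rTensor_mkQ (Q := V) C] at hx
    exact hx
  -- transfer to y
  have hy0 : C.mkQ.rTensor (↥C) y = 0 := by
    apply Module.Flat.lTensor_preserves_injective_linearMap (M := V ⧸ C) C.subtype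
      C.injective_subtype
    have e : C.subtype.lTensor (V ⧸ C) ∘ₗ C.mkQ.rTensor (↥C)
        = C.mkQ.rTensor V ∘ₗ C.subtype.lTensor V := by
      rw [lTensor_comp_rTensor, rTensor_comp_lTensor]
    rw [map_zero, ← LinearMap.comp_apply, e, LinearMap.comp_apply]
    have h3 : C.subtype.lTensor V = TensorProduct.map (LinearMap.id : V →ₗ[k] V) C.subtype := rfl
    rw [h3, hy, hx0]
  -- exactness
  have hy1 : y ∈ LinearMap.ker (C.mkQ.rTensor (↥C)) := hy0
  rw [rTensor_mkQ (Q := ↥C) C] at hy1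
  obtain ⟨z, hz⟩ := hy1
  refine ⟨z, ?_⟩
  have e2 : TensorProduct.map C.subtype C.subtype
      = TensorProduct.map (LinearMap.id : V →ₗ[k] V) C.subtype ∘ₗ C.subtype.rTensor (↥C) := by
    rw [map_comp_rTensor]
    rfl
  rw [e2, LinearMap.comp_apply]
  have hz' : C.subtype.rTensor (↥C) z = y := hz
  rw [hz', hy]

end Intersection

end Stmt5Aux

end Stmt5Aux

open Stmt5Aux in
/-- a left (or right) coideal subalgebra `C` of a Hopf algebra `H` with
`S(C) = C` is a Hopf subalgebra: `Δ(C) ⊆ C ⊗ C`. -/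
theorem stmt5 (k : Type*) [Field k] (H : Type*) [Ring H] [HopfAlgebra k H]
    (hbij : Function.Bijective (HopfAlgebra.antipode (R := k) (A := H)))
    (C : Subalgebra k H)
    (hC : (∀ c ∈ C, Coalgebra.comul (R := k) c ∈
        LinearMap.range (TensorProduct.map (LinearMap.id : H →ₗ[k] H)
          (Subalgebra.toSubmodule C).subtype)) ∨
      (∀ c ∈ C, Coalgebra.comul (R := k) c ∈
        LinearMap.range (TensorProduct.map (Subalgebra.toSubmodule C).subtype
          (LinearMap.id : H →ₗ[k] H))))
    (hS : HopfAlgebra.antipode (R := k) (A := H) '' (C : Set H) = (C : Set H)) :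
    ∀ c ∈ C, Coalgebra.comul (R := k) c ∈
      LinearMap.range (TensorProduct.map (Subalgebra.toSubmodule C).subtype
        (Subalgebra.toSubmodule C).subtype) := by
  classical
  set S : H →ₗ[k] H := HopfAlgebra.antipode (R := k) (A := H) with hSdef
  set M : Submodule k H := Subalgebra.toSubmodule C with hMdef
  have hSC : ∀ x ∈ M, S x ∈ M := by
    intro x hx
    have hmem : S x ∈ S '' (C : Set H) := Set.mem_image_of_mem _ hx
    rw [hSdef, hS] at hmem
    exact hmem
  set Sres : M →ₗ[k] M := S.restrict hSC with hSresdef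
  have hcommS : M.subtype ∘ₗ Sres = S ∘ₗ M.subtype := rfl
  have hsurj : ∀ c ∈ C, ∃ d ∈ M, S d = c := by
    intro c hc
    have hmem : c ∈ S '' (C : Set H) := by rw [hSdef, hS]; exact hc
    obtain ⟨d, hd, hdc⟩ := hmem
    exact ⟨d, hd, hdc⟩
  intro c hc
  rcases hC with hL | hR
  · refine Stmt5Aux.mem_range_map_subtype M _ (hL c hc) ?_
    obtain ⟨d, hd, hdc⟩ := hsurj c hc
    obtain ⟨y, hy⟩ := hL d hd
    refine ⟨TensorProduct.map Sres S (TensorProduct.comm k H M y), ?_⟩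
    have e1 : TensorProduct.map M.subtype (LinearMap.id : H →ₗ[k] H)
          ∘ₗ TensorProduct.map Sres S
        = TensorProduct.map S S ∘ₗ TensorProduct.map M.subtype (LinearMap.id : H →ₗ[k] H) := by
      rw [← TensorProduct.map_comp, ← TensorProduct.map_comp, hcommS]
      rfl
    rw [← LinearMap.comp_apply, e1, LinearMap.comp_apply]
    rw [TensorProduct.map_comm, hy, ← hdc]
    exact (Stmt5Aux.comul_antipode_apply d).symm
  · refine Stmt5Aux.mem_range_map_subtype M _ ?_ (hR c hc)
    obtain ⟨d, hd, hdc⟩ := hsurj c hc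
    obtain ⟨y, hy⟩ := hR d hd
    refine ⟨TensorProduct.map S Sres (TensorProduct.comm k M H y), ?_⟩
    have e1 : TensorProduct.map (LinearMap.id : H →ₗ[k] H) M.subtype
          ∘ₗ TensorProduct.map S Sres
        = TensorProduct.map S S ∘ₗ TensorProduct.map (LinearMap.id : H →ₗ[k] H) M.subtype := by
      rw [← TensorProduct.map_comp, ← TensorProduct.map_comp, hcommS]
      rfl
    rw [← LinearMap.comp_apply, e1, LinearMap.comp_apply]
    rw [TensorProduct.map_comm, hy, ← hdc]
    exact (Stmt5Aux.comul_antipode_apply d).symm
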